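/- Define g : ℝ² → ℝ ∪ {+∞} by g(z) = 0 if z₁ ≥ 0 and g(z) = +∞ otherwise, define F : ℝ² → ℝ² by F(x) = (x₁, x₂), and for Δ ∈ (0,1) define F̃_Δ(x) = (x₁ − Δ², x₂). Then: (i) g is convex and lower semicontinuous; (ii) {F̃_Δ : Δ ∈ (0,1)} are fully linear models of F at x̄ = (0,0) with constants κ_F = 1 and κ_G = 1; (iii) F(0,0) ∉ int(dom g); and (iv) for every Δ ∈ (0,1), g(F(0,0)) = 0 while g(F̃_Δ(0,0)) = +∞, so |g(F(0,0)) − g(F̃_Δ(0,0))| is infinite and no bound of the form |g(F(y)) − g(F̃_Δ(y))| ≤ κ_f Δ² can hold at y = (0,0). -/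

import Mathlib

open Metric Set

/-- The indicator-type function `g(z) = 0` if `z₁ ≥ 0`, `+∞` otherwise. -/
noncomputable def g5 (z : EuclideanSpace ℝ (Fin 2)) : EReal :=
  if 0 ≤ z 0 then 0 else ⊤

/-- The identity map `F(x) = (x₁, x₂)`, given by components. -/
def F5 (i : Fin 2) (x : EuclideanSpace ℝ (Fin 2)) : ℝ := x i

/-- The shifted models `F̃_Δ(x) = (x₁ − Δ², x₂)`, given by components. -/
noncomputable def Ft5 (Δ : ℝ) (i : Fin 2) (x : EuclideanSpace ℝ (Fin 2)) : ℝ :=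
  if i = 0 then x 0 - Δ ^ 2 else x 1

open Filter Topology
lemma contDiff_F5 (i : Fin 2) : ContDiff ℝ 1 (F5 i) := by
  have : F5 i = ⇑(EuclideanSpace.proj (𝕜 := ℝ) i) := rfl
  rw [this]
  exact ContinuousLinearMap.contDiff _


/-- **Example 3.3** (importance of `F(x̄) ∈ int(dom g)` for function values):
(i) `g5` is convex lsc; (ii) the `Ft5 Δ` are fully linear models of `F5` at `x̄ = (0,0)` with
constants `κF = κG = 1` on `(0,1)`; (iii) `F(0,0) ∉ int(dom g)`; and (iv) `g(F(0,0)) = 0` while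
`g(F̃_Δ(0,0)) = +∞`, so no bound `|g(F(y)) − g(F̃_Δ(y))| ≤ κf Δ²` can hold at `y = (0,0)`. -/
theorem example_importance_of_interior_function_values :
    -- (i) convex and lower semicontinuous
    (Convex ℝ {p : EuclideanSpace ℝ (Fin 2) × ℝ | g5 p.1 ≤ (p.2 : EReal)} ∧
      IsClosed {p : EuclideanSpace ℝ (Fin 2) × ℝ | g5 p.1 ≤ (p.2 : EReal)}) ∧
    -- (ii) fully linear models at x̄ = 0 with κF = 1, κG = 1, Δ̄ = 1
    ((∀ i, ContDiff ℝ 1 (F5 i)) ∧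
      ∀ Δ ∈ Ioo (0:ℝ) 1, (∀ i, ContDiff ℝ 1 (Ft5 Δ i)) ∧
        ∀ i, ∀ y ∈ ball (0 : EuclideanSpace ℝ (Fin 2)) Δ,
          |F5 i y - Ft5 Δ i y| ≤ 1 * Δ ^ 2 ∧
          ‖gradient (F5 i) y - gradient (Ft5 Δ i) y‖ ≤ 1 * Δ) ∧
    -- (iii) F(0,0) ∉ int(dom g)
    (WithLp.toLp 2 (fun i => F5 i 0) : EuclideanSpace ℝ (Fin 2)) ∉ interior {z | g5 z < ⊤} ∧
    -- (iv) the composition error is infinite at (0,0)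
    ∀ Δ ∈ Ioo (0:ℝ) 1,
      g5 (WithLp.toLp 2 (fun i => F5 i 0) : EuclideanSpace ℝ (Fin 2)) = 0 ∧
      g5 (WithLp.toLp 2 (fun i => Ft5 Δ i 0) : EuclideanSpace ℝ (Fin 2)) = ⊤ := by
  have hset : {p : EuclideanSpace ℝ (Fin 2) × ℝ | g5 p.1 ≤ (p.2 : EReal)} =
      {p : EuclideanSpace ℝ (Fin 2) × ℝ | 0 ≤ p.1 0 ∧ 0 ≤ p.2} := by
    ext p
    simp only [mem_setOf_eq, g5]
    by_cases h : 0 ≤ p.1 0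
    · simp [h, ← EReal.coe_zero, EReal.coe_le_coe_iff]
    · simp [h]
  refine ⟨⟨?_, ?_⟩, ⟨?_, ?_⟩, ?_, ?_⟩
  · rw [hset]
    intro p hp q hq a b ha hb hab
    constructor
    · have : (a • p + b • q).1 0 = a * p.1 0 + b * q.1 0 := rfl
      rw [this]
      exact add_nonneg (mul_nonneg ha hp.1) (mul_nonneg hb hq.1)
    · exact add_nonneg (mul_nonneg ha hp.2) (mul_nonneg hb hq.2)
  · rw [hset]
    have h1 : IsClosed {p : EuclideanSpace ℝ (Fin 2) × ℝ | 0 ≤ p.1 0} :=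
      isClosed_le continuous_const ((EuclideanSpace.proj (𝕜 := ℝ) (0 : Fin 2)).continuous.comp continuous_fst)
    have h2 : IsClosed {p : EuclideanSpace ℝ (Fin 2) × ℝ | 0 ≤ p.2} :=
      isClosed_le continuous_const continuous_snd
    exact h1.inter h2
  · exact contDiff_F5
  · intro Δ hΔ
    have hfun : ∀ i : Fin 2, Ft5 Δ i = fun x => F5 i x - (if i = 0 then Δ ^ 2 else 0) := by
      intro i; funext x; fin_cases i <;> simp [Ft5, F5]
    constructor
    · intro i
      rw [hfun i]
      exact (contDiff_F5 i).sub contDiff_const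
    · intro i y _
      constructor
      · rw [hfun i]
        simp only [sub_sub_cancel_left, abs_neg, one_mul]
        fin_cases i <;> simp [abs_of_nonneg (sq_nonneg Δ), sq_nonneg]
      · have : gradient (Ft5 Δ i) y = gradient (F5 i) y := by
          rw [hfun i]
          unfold gradient
          rw [fderiv_sub_const]
        rw [this, sub_self, norm_zero]
        have := hΔ.1
        positivity
  · intro hmem
    rw [mem_interior_iff_mem_nhds] at hmem
    have h0 : (WithLp.toLp 2 (fun i => F5 i 0) : EuclideanSpace ℝ (Fin 2)) = 0 := rfl
    rw [h0] at hmem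
    set v : EuclideanSpace ℝ (Fin 2) := WithLp.toLp 2 (fun i => if i = 0 then -1 else 0) with hv
    have hc : Continuous (fun t : ℝ => t • v) := continuous_id.smul continuous_const
    have hc0 : (fun t : ℝ => t • v) 0 = 0 := by simp
    have hev : ∀ᶠ t in 𝓝 (0 : ℝ), (t • v) ∈ {z : EuclideanSpace ℝ (Fin 2) | g5 z < ⊤} := by
      have htd : Filter.Tendsto (fun t : ℝ => t • v) (𝓝 0) (𝓝 0) := by
        simpa using hc.tendsto 0
      exact htd.eventually_mem hmem
    have hev' : ∀ᶠ t in 𝓝[>] (0 : ℝ), (t • v) ∈ {z : EuclideanSpace ℝ (Fin 2) | g5 z < ⊤} :=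
      nhdsWithin_le_nhds hev
    obtain ⟨t, ht, htpos⟩ := (hev'.and (eventually_mem_nhdsWithin)).exists
    have hval : (t • v) 0 = -t := by
      show t * (if (0 : Fin 2) = 0 then (-1 : ℝ) else 0) = -t
      rw [if_pos rfl]; ring
    simp only [mem_setOf_eq, g5, hval] at ht
    rw [mem_Ioi] at htpos
    rw [if_neg (by linarith)] at ht
    exact lt_irrefl _ ht
  · intro Δ hΔ
    constructor
    · have h0 : (WithLp.toLp 2 (fun i => F5 i 0) : EuclideanSpace ℝ (Fin 2)) = 0 := rfl
      rw [h0]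
      simp [g5]
    · show (if (0:ℝ) ≤ Ft5 Δ 0 (0 : EuclideanSpace ℝ (Fin 2)) then (0:EReal) else ⊤) = ⊤
      rw [if_neg]
      have h1 : Ft5 Δ 0 (0 : EuclideanSpace ℝ (Fin 2)) = -Δ ^ 2 := by
        show (if (0 : Fin 2) = 0 then (0 : EuclideanSpace ℝ (Fin 2)) 0 - Δ ^ 2 else _) = -Δ ^ 2
        rw [if_pos rfl]
        show (0 : ℝ) - Δ ^ 2 = -Δ ^ 2
        ring
      rw [h1]
      have := hΔ.1
      nlinarith
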